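/- If λ is a regular uncountable cardinal and ⟨C_α : α < λ⁺⟩ is a □_λ-sequence, then for every ordinal θ < λ, the set of indecomposable ordinals γ with θ < γ < λ such that {α < λ⁺ : cf(α) < λ and otp(C_α) = γ} is stationary in λ⁺, is nonempty. Consequently, the set O of such indecomposable γ is cofinal in λ. -/

import Mathlib

open Ordinal Set

noncomputable section

/-- The set of accumulation points of `C` that belong to `C`. -/
def acc (C : Set Ordinal) : Set Ordinal :=
  {β | β ∈ C ∧ ∀ γ < β, ∃ δ ∈ C, γ < δ ∧ δ < β}

/-- Non-accumulation points of `C`. -/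
def nacc (C : Set Ordinal) : Set Ordinal := C \ acc C

/-- `X ∩ α` is cofinal in `α`. -/
def CofinalIn (X : Set Ordinal) (α : Ordinal) : Prop :=
  ∀ γ < α, ∃ δ ∈ X, γ < δ ∧ δ < α

/-- Accumulation points of `C` (not necessarily members of `C`). -/
def accPlus (C : Set Ordinal) : Set Ordinal :=
  {β | (∃ δ ∈ C, δ < β) ∧ ∀ γ < β, ∃ δ ∈ C, γ < δ ∧ δ < β}

def IsClosedSet (C : Set Ordinal) : Prop := accPlus C ⊆ C

/-- `C` is a club (closed and unbounded) subset of `α`. -/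
def IsClubIn (C : Set Ordinal) (α : Ordinal) : Prop :=
  C ⊆ Set.Iio α ∧ CofinalIn C α ∧ ∀ β < α, β ∈ accPlus C → β ∈ C

/-- The `i`-th element of the set of ordinals `C` (the inverse collapse of `C`). -/
def nth (C : Set Ordinal) (i : Ordinal) : Ordinal :=
  sInf (C \ Set.range (fun j : Set.Iio i => nth C j.1))
termination_by i
decreasing_by exact j.2

/-- The order type of a set of ordinals: the least `i` such that the first `i`
elements of `C` exhaust `C`. -/
def otp (C : Set Ordinal) : Ordinal :=
  sInf {i | C ⊆ Set.range (fun j : Set.Iio i => nth C j.1)}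

/-- The image of `E` under the order isomorphism (inverse collapse) `π_C : otp(C) → C`. -/
def collapseImage (C E : Set Ordinal) : Set Ordinal :=
  {β | β ∈ C ∧ otp (C ∩ Set.Iio β) ∈ E}

def IsStationaryIn (S : Set Ordinal) (α : Ordinal) : Prop :=
  ∀ D, IsClubIn D α → (S ∩ D).Nonempty

/-- A `□_λ`-sequence. -/
def IsSquareSeq (lam : Cardinal) (C : Ordinal → Set Ordinal) : Prop :=
  ∀ α < (Order.succ lam).ord, Order.IsSuccLimit α →
    IsClubIn (C α) α ∧ otp (C α) ≤ lam.ord ∧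
    ∀ β ∈ acc (C α), C β = C α ∩ Set.Iio β

/-- An Ostaszewski square (`⊠_λ`) sequence. -/
def IsOstSeq (lam : Cardinal) (C : Ordinal → Set Ordinal) : Prop :=
  IsSquareSeq lam C ∧
  ∀ A : Ordinal → Set Ordinal,
    (∀ i < lam.ord, CofinalIn (A i) (Order.succ lam).ord) →
    ∀ θ < lam.ord, Order.IsSuccLimit θ →
    ∀ D, IsClubIn D (Order.succ lam).ord →
    ∃ α < (Order.succ lam).ord, otp (C α) = θ ∧
      ∀ i < θ, nth (C α) (i + 1) ∈ A i ∧
        ∃ β ∈ D, nth (C α) i < β ∧ β < nth (C α) (i + 1)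

universe u

/-- the first `i` values of the enumeration of `C` -/
def rng (C : Set Ordinal.{u}) (i : Ordinal.{u}) : Set Ordinal.{u} :=
  Set.range (fun j : Set.Iio i => nth C j.1)

theorem otp_def (C : Set Ordinal.{u}) : otp C = sInf {i : Ordinal.{u} | C ⊆ rng C i} := rfl

theorem mem_rng_iff {C : Set Ordinal.{u}} {i x : Ordinal.{u}} :
    x ∈ rng C i ↔ ∃ j < i, nth C j = x := by
  constructor
  · rintro ⟨⟨j, hj⟩, rfl⟩; exact ⟨j, hj, rfl⟩
  · rintro ⟨j, hj, rfl⟩; exact ⟨⟨j, hj⟩, rfl⟩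

theorem nth_eq (C : Set Ordinal.{u}) (i : Ordinal.{u}) : nth C i = sInf (C \ rng C i) := by
  rw [nth]; rfl

theorem rng_mono {C : Set Ordinal.{u}} {i i' : Ordinal.{u}} (h : i ≤ i') :
    rng C i ⊆ rng C i' := by
  intro x hx
  rcases mem_rng_iff.1 hx with ⟨j, hj, rfl⟩
  exact mem_rng_iff.2 ⟨j, lt_of_lt_of_le hj h, rfl⟩

/-- stage `i` of the enumeration of `C` is meaningful -/
def Stage (C : Set Ordinal.{u}) (i : Ordinal.{u}) : Prop := (C \ rng C i).Nonempty

theorem Stage.anti {C : Set Ordinal.{u}} {i i' : Ordinal.{u}} (h : i ≤ i') (hs : Stage C i') :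
    Stage C i := by
  rcases hs with ⟨x, hx1, hx2⟩
  exact ⟨x, hx1, fun hx => hx2 (rng_mono h hx)⟩

theorem Stage.nth_mem {C : Set Ordinal.{u}} {i : Ordinal.{u}} (h : Stage C i) :
    nth C i ∈ C ∧ nth C i ∉ rng C i := by
  rw [nth_eq]; exact csInf_mem h

theorem Stage.nth_le {C : Set Ordinal.{u}} {i : Ordinal.{u}} (_ : Stage C i) {x : Ordinal.{u}}
    (hx : x ∈ C) (hx2 : x ∉ rng C i) : nth C i ≤ x := by
  rw [nth_eq]; exact csInf_le (OrderBot.bddBelow _) ⟨hx, hx2⟩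

theorem nth_lt_nth {C : Set Ordinal.{u}} {j i : Ordinal.{u}} (h : Stage C i) (hj : j < i) :
    nth C j < nth C i := by
  have hle : nth C j ≤ nth C i := by
    rw [nth_eq, nth_eq]
    exact csInf_le_csInf (OrderBot.bddBelow _) h
      (Set.diff_subset_diff_right (rng_mono hj.le))
  rcases lt_or_eq_of_le hle with h' | h'
  · exact h'
  · exact absurd (mem_rng_iff.2 ⟨j, hj, h'⟩) h.nth_mem.2

theorem nth_le_nth {C : Set Ordinal.{u}} {j i : Ordinal.{u}} (h : Stage C i) (hj : j ≤ i) :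
    nth C j ≤ nth C i := by
  rcases lt_or_eq_of_le hj with h' | h'
  · exact (nth_lt_nth h h').le
  · subst h'; exact le_rfl

theorem self_le_nth {C : Set Ordinal.{u}} {i : Ordinal.{u}} (h : Stage C i) : i ≤ nth C i := by
  induction i using Ordinal.induction with
  | _ i IH =>
    by_contra hlt
    push_neg at hlt
    have h1 : nth C i ≤ nth C (nth C i) := IH _ hlt (h.anti hlt.le)
    have h2 : nth C (nth C i) < nth C i := nth_lt_nth h hlt
    exact absurd (h1.trans_lt h2) (lt_irrefl _)

theorem mem_otpSet_of_subset_Iio {C : Set Ordinal.{u}} {A : Ordinal.{u}}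
    (hb : C ⊆ Set.Iio A) : C ⊆ rng C A := by
  by_contra hn
  have hs : Stage C A := by
    rcases Set.not_subset.1 hn with ⟨c, hc1, hc2⟩
    exact ⟨c, hc1, hc2⟩
  exact absurd ((self_le_nth hs).trans_lt (hb hs.nth_mem.1)) (lt_irrefl _)

theorem otp_le_of_subset_Iio {C : Set Ordinal.{u}} {A : Ordinal.{u}} (hb : C ⊆ Set.Iio A) :
    otp C ≤ A := by
  rw [otp_def]
  exact csInf_le (OrderBot.bddBelow _) (mem_otpSet_of_subset_Iio hb)

theorem subset_rng_otp {C : Set Ordinal.{u}} {A : Ordinal.{u}} (hb : C ⊆ Set.Iio A) :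
    C ⊆ rng C (otp C) := by
  have h : otp C ∈ {i : Ordinal.{u} | C ⊆ rng C i} := by
    rw [otp_def]
    exact csInf_mem ⟨A, mem_otpSet_of_subset_Iio hb⟩
  exact h

theorem exists_nth_eq {C : Set Ordinal.{u}} {A : Ordinal.{u}} (hb : C ⊆ Set.Iio A)
    {c : Ordinal.{u}} (hc : c ∈ C) : ∃ j : Ordinal.{u}, j < otp C ∧ nth C j = c :=
  mem_rng_iff.1 (subset_rng_otp hb hc)

theorem stage_of_lt_otp {C : Set Ordinal.{u}} {i : Ordinal.{u}} (hi : i < otp C) :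
    Stage C i := by
  by_contra hemp
  have hsub : C ⊆ rng C i := fun c hc => not_not.1 fun hn => hemp ⟨c, hc, hn⟩
  have : otp C ≤ i := by rw [otp_def]; exact csInf_le (OrderBot.bddBelow _) hsub
  exact absurd this (not_le.2 hi)

theorem lt_otp_of_stage {C : Set Ordinal.{u}} {A i : Ordinal.{u}} (hb : C ⊆ Set.Iio A)
    (hs : Stage C i) : i < otp C := by
  by_contra hn
  push_neg at hn
  rcases mem_rng_iff.1 (subset_rng_otp hb hs.nth_mem.1) with ⟨j, hj, hje⟩
  exact hs.nth_mem.2 (mem_rng_iff.2 ⟨j, lt_of_lt_of_le hj hn, hje⟩)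

/-- the initial segment of `C` below `nth C i` is the image of `Iio i`. -/
theorem segment_eq {C : Set Ordinal.{u}} {i : Ordinal.{u}} (h : Stage C i) :
    C ∩ Set.Iio (nth C i) = nth C '' Set.Iio i := by
  ext c
  constructor
  · rintro ⟨hc1, hc2⟩
    by_cases hr : c ∈ rng C i
    · rcases mem_rng_iff.1 hr with ⟨j, hj, rfl⟩
      exact ⟨j, hj, rfl⟩
    · exact absurd (h.nth_le hc1 hr) (not_le.2 hc2)
  · rintro ⟨j, hj, rfl⟩
    exact ⟨(h.anti hj.le).nth_mem.1, nth_lt_nth h hj⟩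

theorem nthD_eq {C : Set Ordinal.{u}} {i : Ordinal.{u}} (h : Stage C i) :
    ∀ j < i, nth (C ∩ Set.Iio (nth C i)) j = nth C j := by
  set D := C ∩ Set.Iio (nth C i) with hD
  intro j
  induction j using Ordinal.induction with
  | _ j IH =>
    intro hj
    have hsj : Stage C j := h.anti hj.le
    have hDj : nth C j ∈ D \ rng D j := by
      refine ⟨⟨hsj.nth_mem.1, nth_lt_nth h hj⟩, ?_⟩
      intro hr
      rcases mem_rng_iff.1 hr with ⟨k, hk, hke⟩
      rw [IH k hk (hk.trans hj)] at hke
      exact absurd hke (ne_of_lt (nth_lt_nth hsj hk))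
    have hlb : ∀ d ∈ D \ rng D j, nth C j ≤ d := by
      rintro d ⟨hd1, hd2⟩
      have hd1' : d ∈ nth C '' Set.Iio i := by rw [← segment_eq h]; exact hd1
      rcases hd1' with ⟨k, hk, rfl⟩
      rcases lt_or_ge k j with hkj | hjk
      · exact absurd (mem_rng_iff.2 ⟨k, hkj, by rw [IH k hkj (hkj.trans hj)]⟩) hd2
      · exact nth_le_nth (h.anti hk.le) hjk
    rw [nth_eq]
    exact le_antisymm (csInf_le (OrderBot.bddBelow _) hDj) (le_csInf ⟨_, hDj⟩ hlb)

theorem otp_segment {C : Set Ordinal.{u}} {i : Ordinal.{u}} (h : Stage C i) :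
    otp (C ∩ Set.Iio (nth C i)) = i := by
  set D := C ∩ Set.Iio (nth C i) with hD
  have hDb : D ⊆ Set.Iio (nth C i) := Set.inter_subset_right
  have hle : otp D ≤ i := by
    rw [otp_def]
    refine csInf_le (OrderBot.bddBelow _) ?_
    intro d hd
    have hd' : d ∈ nth C '' Set.Iio i := by rw [← segment_eq h]; exact hd
    rcases hd' with ⟨k, hk, rfl⟩
    exact mem_rng_iff.2 ⟨k, hk, nthD_eq h k hk⟩
  rcases lt_or_eq_of_le hle with hlt | heq
  · exfalso
    have hmem : nth C (otp D) ∈ D := ⟨(h.anti hlt.le).nth_mem.1, nth_lt_nth h hlt⟩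
    rcases mem_rng_iff.1 (subset_rng_otp hDb hmem) with ⟨k, hk, hke⟩
    rw [nthD_eq h k (hk.trans hlt)] at hke
    exact absurd hke (ne_of_lt (nth_lt_nth (h.anti hlt.le) hk))
  · exact heq

theorem nth_limit {C : Set Ordinal.{u}} {α i : Ordinal.{u}} (hclub : IsClubIn C α)
    (hlim : Order.IsSuccLimit i) (hs : Stage C i) :
    nth C i = Ordinal.bsup i (fun j _ => nth C j) := by
  set s := Ordinal.bsup i (fun j _ => nth C j) with hsdef
  have hub : s ≤ nth C i := Ordinal.bsup_le (fun j hj => (nth_lt_nth hs hj).le)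
  rcases eq_or_lt_of_le hub with he | hlt
  · exact he.symm
  · exfalso
    have h1 : nth C 1 ≤ s := Ordinal.le_bsup _ 1 (by have := hlim.succ_lt hlim.pos; rwa [Ordinal.succ_zero] at this)
    have hmemA : s ∈ accPlus C := by
      refine ⟨⟨nth C 0, (hs.anti (zero_le : (0:Ordinal) ≤ i)).nth_mem.1,
        lt_of_lt_of_le (nth_lt_nth (hs.anti (by have := hlim.succ_lt hlim.pos; rwa [Ordinal.succ_zero] at this : (1:Ordinal) < i).le) zero_lt_one) h1⟩, ?_⟩
      intro c hc
      rcases (Ordinal.lt_bsup _).1 hc with ⟨j, hj, hcj⟩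
      exact ⟨nth C j, (hs.anti hj.le).nth_mem.1, hcj,
        lt_of_lt_of_le (nth_lt_nth (hs.anti (hlim.succ_lt hj).le) (Order.lt_succ j))
          (Ordinal.le_bsup _ _ (hlim.succ_lt hj))⟩
    have hsα : s < α := lt_trans hlt (hclub.1 hs.nth_mem.1)
    have hsC : s ∈ C := hclub.2.2 s hsα hmemA
    have hsr : s ∉ rng C i := by
      intro hr
      rcases mem_rng_iff.1 hr with ⟨k, hk, hke⟩
      have hk2 : nth C (Order.succ k) ≤ s := Ordinal.le_bsup _ _ (hlim.succ_lt hk)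
      rw [← hke] at hk2
      exact absurd hk2
        (not_le.2 (nth_lt_nth (hs.anti (hlim.succ_lt hk).le) (Order.lt_succ k)))
    exact absurd (hs.nth_le hsC hsr) (not_le.2 hlt)

theorem nth_limit_mem_acc {C : Set Ordinal.{u}} {α i : Ordinal.{u}} (hclub : IsClubIn C α)
    (hlim : Order.IsSuccLimit i) (hs : Stage C i) : nth C i ∈ acc C := by
  refine ⟨hs.nth_mem.1, ?_⟩
  intro c hc
  rw [nth_limit hclub hlim hs] at hc
  rcases (Ordinal.lt_bsup _).1 hc with ⟨j, hj, hcj⟩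
  exact ⟨nth C j, (hs.anti hj.le).nth_mem.1, hcj, nth_lt_nth hs hj⟩

theorem stmt0 (lam : Cardinal) (hreg : lam.IsRegular) (hunc : Cardinal.aleph0 < lam)
    (C : Ordinal → Set Ordinal) (hC : IsSquareSeq lam C) :
    ∀ θ < lam.ord, ∃ γ : Ordinal,
      (∀ a < γ, ∀ b < γ, a + b < γ) ∧ θ < γ ∧ γ < lam.ord ∧
      IsStationaryIn
        {α | α < (Order.succ lam).ord ∧ α.cof < lam ∧ otp (C α) = γ}
        (Order.succ lam).ord := by
  intro θ hθ
  set T := (Order.succ lam).ord with hT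
  by_contra hcon
  push_neg at hcon
  have hTreg : (Order.succ lam).IsRegular := Cardinal.isRegular_succ hreg.aleph0_le
  have haleT : Cardinal.aleph0 ≤ Order.succ lam := hreg.aleph0_le.trans (Order.le_succ _)
  have hTlim : Order.IsSuccLimit T := Cardinal.isSuccLimit_ord haleT
  have hlamlim : Order.IsSuccLimit lam.ord := Cardinal.isSuccLimit_ord hreg.aleph0_le
  have hIioT : IsClubIn (Set.Iio T) T :=
    ⟨fun x hx => hx,
     fun ξ hξ => ⟨Order.succ ξ, hTlim.succ_lt hξ, Order.lt_succ ξ, hTlim.succ_lt hξ⟩,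
     fun β hβ _ => hβ⟩
  -- choose avoiding clubs
  have hE : ∀ γ : Ordinal, ∃ Eg : Set Ordinal, IsClubIn Eg T ∧
      (((∀ a < γ, ∀ b < γ, a + b < γ) ∧ θ < γ ∧ γ < lam.ord) →
        {α | α < T ∧ α.cof < lam ∧ otp (C α) = γ} ∩ Eg = ∅) := by
    intro γ
    by_cases h : (∀ a < γ, ∀ b < γ, a + b < γ) ∧ θ < γ ∧ γ < lam.ord
    · have hns := hcon γ h.1 h.2.1 h.2.2
      have h2 : ∃ D, IsClubIn D T ∧ {α | α < T ∧ α.cof < lam ∧ otp (C α) = γ} ∩ D = ∅ := by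
        by_contra h3
        push_neg at h3
        exact hns fun D hD => h3 D hD
      rcases h2 with ⟨D, hD1, hD2⟩
      exact ⟨D, hD1, fun _ => hD2⟩
    · exact ⟨Set.Iio T, hIioT, fun hcond => absurd hcond h⟩
  choose E hEclub hEavoid using hE
  set S := {β : Ordinal | β < T ∧ ∀ γ < lam.ord, β ∈ E γ} with hSdef
  have hSsub : S ⊆ Set.Iio T := fun β hβ => hβ.1
  -- S is a club in T
  have hSclub : IsClubIn S T := by
    refine ⟨hSsub, ?_, ?_⟩
    · -- cofinal
      intro ξ hξ
      set g : Ordinal → Ordinal := fun x => Ordinal.bsup lam.ord (fun γ _ => sInf (E γ ∩ Set.Ioi x)) with hg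
      have hnext : ∀ x < T, ∀ γ < lam.ord,
          sInf (E γ ∩ Set.Ioi x) ∈ E γ ∩ Set.Ioi x ∧ sInf (E γ ∩ Set.Ioi x) < T := by
        intro x hx γ hγ
        have hne : (E γ ∩ Set.Ioi x).Nonempty := by
          rcases (hEclub γ).2.1 x hx with ⟨δ, hδE, hδ1, hδ2⟩
          exact ⟨δ, hδE, hδ1⟩
        have hmem := csInf_mem hne
        exact ⟨hmem, (hEclub γ).1 hmem.1⟩
      have hglt : ∀ x < T, g x < T := by
        intro x hx
        exact Cardinal.bsup_lt_ord_of_isRegular hTreg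
          (by rw [Cardinal.card_ord]; exact Order.lt_succ lam)
          (fun γ hγ => (hnext x hx γ hγ).2)
      have hgGT : ∀ x < T, x < g x := by
        intro x hx
        calc x < sInf (E 0 ∩ Set.Ioi x) := (hnext x hx 0 hlamlim.pos).1.2
        _ ≤ g x := Ordinal.le_bsup _ 0 hlamlim.pos
      set f : ℕ → Ordinal := fun n => g^[n] (Order.succ ξ) with hf
      have hf0 : f 0 = Order.succ ξ := rfl
      have hfsucc : ∀ n, f (n+1) = g (f n) := fun n => Function.iterate_succ_apply' g n _
      have hfT : ∀ n, f n < T := by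
        intro n; induction n with
        | zero => rw [hf0]; exact hTlim.succ_lt hξ
        | succ n ih => rw [hfsucc]; exact hglt _ ih
      have hfmono : ∀ n, f n < f (n+1) := by
        intro n; rw [hfsucc]; exact hgGT _ (hfT n)
      set s := iSup f with hs
      have hsT : s < T := Cardinal.iSup_lt_ord_lift_of_isRegular hTreg
        (by rw [Cardinal.mk_nat, Cardinal.lift_aleph0]
            exact lt_of_le_of_lt hreg.aleph0_le (Order.lt_succ lam)) hfT
      have hfles : ∀ n, f n ≤ s := fun n => Ordinal.le_iSup f n
      have hflts : ∀ n, f n < s := fun n => lt_of_lt_of_le (hfmono n) (hfles (n+1))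
      have hδn : ∀ n γ, γ < lam.ord → sInf (E γ ∩ Set.Ioi (f n)) ∈ E γ ∧
          f n < sInf (E γ ∩ Set.Ioi (f n)) ∧ sInf (E γ ∩ Set.Ioi (f n)) < s := by
        intro n γ hγ
        refine ⟨(hnext _ (hfT n) γ hγ).1.1, (hnext _ (hfT n) γ hγ).1.2, ?_⟩
        calc sInf (E γ ∩ Set.Ioi (f n)) ≤ g (f n) := Ordinal.le_bsup _ γ hγ
        _ = f (n+1) := (hfsucc n).symm
        _ < s := hflts (n+1)
      have hsS : s ∈ S := by
        refine ⟨hsT, ?_⟩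
        intro γ hγ
        refine (hEclub γ).2.2 s hsT ⟨⟨sInf (E γ ∩ Set.Ioi (f 0)), (hδn 0 γ hγ).1, (hδn 0 γ hγ).2.2⟩, ?_⟩
        intro c hc
        rcases Ordinal.lt_iSup_iff.1 hc with ⟨n, hn⟩
        exact ⟨sInf (E γ ∩ Set.Ioi (f n)), (hδn n γ hγ).1,
          lt_trans hn (hδn n γ hγ).2.1, (hδn n γ hγ).2.2⟩
      exact ⟨s, hsS, lt_of_lt_of_le (Order.lt_succ ξ) (hf0 ▸ hfles 0), hsT⟩
    · -- closed
      intro β hβT hacc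
      refine ⟨hβT, ?_⟩
      intro γ hγ
      refine (hEclub γ).2.2 β hβT ?_
      rcases hacc.1 with ⟨δ, hδS, hδβ⟩
      refine ⟨⟨δ, hδS.2 γ hγ, hδβ⟩, ?_⟩
      intro c hc
      rcases hacc.2 c hc with ⟨δ', hδ'S, h1, h2⟩
      exact ⟨δ', hδ'S.2 γ hγ, h1, h2⟩
  -- S has order type above lam.ord
  have hostS : lam.ord < otp S := by
    by_contra hn
    push_neg at hn
    set s := Ordinal.bsup lam.ord (fun j _ => nth S j) with hs
    have hnthT : ∀ j : Ordinal, nth S j < T := by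
      intro j
      by_cases h : Stage S j
      · exact hSsub h.nth_mem.1
      · rw [nth_eq]
        have hemp : S \ rng S j = ∅ := Set.not_nonempty_iff_eq_empty.1 h
        rw [hemp, Ordinal.sInf_empty]
        exact hTlim.pos
    have hsT : s < T := Cardinal.bsup_lt_ord_of_isRegular hTreg
      (by rw [Cardinal.card_ord]; exact Order.lt_succ lam) (fun j _ => hnthT j)
    rcases hSclub.2.1 s hsT with ⟨δ, hδS, hδ1, hδ2⟩
    rcases exists_nth_eq hSsub hδS with ⟨j, hj, rfl⟩
    exact absurd (Ordinal.le_bsup (fun j _ => nth S j) j (lt_of_lt_of_le hj hn)) (not_le.2 hδ1)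
  have hStage : ∀ j ≤ lam.ord, Stage S j := fun j hj => stage_of_lt_otp (lt_of_le_of_lt hj hostS)
  set A := nth S lam.ord with hA
  have hAS : A ∈ S := (hStage _ le_rfl).nth_mem.1
  have hAT : A < T := hSsub hAS
  have hAacc : A ∈ acc S := nth_limit_mem_acc hSclub hlamlim (hStage _ le_rfl)
  have hAlim : Order.IsSuccLimit A := by
    rw [Ordinal.isSuccLimit_iff, Order.isSuccPrelimit_iff_succ_lt]
    constructor
    · intro h0
      have h1 : nth S 0 < nth S lam.ord := nth_lt_nth (hStage _ le_rfl) hlamlim.pos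
      rw [← hA, h0] at h1
      exact absurd h1 (not_lt_of_ge zero_le)
    · intro a ha
      rcases hAacc.2 a ha with ⟨δ, hδS, h1, h2⟩
      exact lt_of_le_of_lt (Order.succ_le_of_lt h1) h2
  obtain ⟨hKclub, hKotp, hKcoh⟩ := hC A hAT hAlim
  set K := C A with hK
  have hKsub : K ⊆ Set.Iio A := hKclub.1
  -- otp K = lam.ord
  have hotpK : otp K = lam.ord := by
    refine le_antisymm hKotp ?_
    by_contra hn
    push_neg at hn
    have hch : ∀ i : Ordinal, ∃ j, j < lam.ord ∧ (i < otp K → nth K i < nth S j) := by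
      intro i
      by_cases hi : i < otp K
      · have h1 : nth K i < A := hKsub (stage_of_lt_otp hi).nth_mem.1
        rw [hA, nth_limit hSclub hlamlim (hStage _ le_rfl)] at h1
        rcases (Ordinal.lt_bsup _).1 h1 with ⟨j, hj, hij⟩
        exact ⟨j, hj, fun _ => hij⟩
      · exact ⟨0, hlamlim.pos, fun h => absurd h hi⟩
    choose m hm1 hm2 using hch
    set j' := Ordinal.bsup (otp K) (fun i _ => m i) with hj'
    have hj'lt : j' < lam.ord := by
      refine Ordinal.bsup_lt_ord ?_ (fun i _ => hm1 i)
      rw [hreg.cof_eq]; exact Cardinal.lt_ord.1 hn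
    have hx : nth S j' < A := nth_lt_nth (hStage _ le_rfl) hj'lt
    rcases hKclub.2.1 _ hx with ⟨δ, hδK, h1, h2⟩
    rcases exists_nth_eq hKsub hδK with ⟨i, hi, rfl⟩
    have h3 : nth K i < nth S j' :=
      lt_of_lt_of_le (hm2 i hi) (nth_le_nth (hStage _ hj'lt.le) (Ordinal.le_bsup _ i hi))
    exact absurd h3 (not_lt.2 h1.le)
  have hKstage : ∀ i < lam.ord, Stage K i := fun i hi => stage_of_lt_otp (hotpK ▸ hi)
  have hKltA : ∀ i < lam.ord, nth K i < A := fun i hi => hKsub (hKstage i hi).nth_mem.1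
  -- the recursion
  set P : Ordinal × Ordinal → Prop :=
    fun p => p.1 < lam.ord ∧ p.2 ∈ S ∧ p.2 < A ∧ nth K p.1 < p.2 with hP
  have hstep : ∀ p, P p → ∃ q, P q ∧ p.1 + p.1 + 1 ≤ q.1 ∧ p.2 < nth K q.1 := by
    rintro ⟨i, e⟩ ⟨hi, heS, heA, hie⟩
    rcases hKclub.2.1 e heA with ⟨δ, hδK, h1, h2⟩
    rcases exists_nth_eq hKsub hδK with ⟨i₁, hi₁, rfl⟩
    rw [hotpK] at hi₁
    set i' := max i₁ (i + i + 1) with hi'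
    have hii1 : i + i + 1 < lam.ord := by
      rw [Cardinal.lt_ord, Ordinal.card_add, Ordinal.card_add, Ordinal.card_one]
      refine Cardinal.add_lt_of_lt hreg.aleph0_le
        (Cardinal.add_lt_of_lt hreg.aleph0_le (Cardinal.lt_ord.1 hi) (Cardinal.lt_ord.1 hi)) ?_
      exact lt_of_lt_of_le Cardinal.one_lt_aleph0 hreg.aleph0_le
    have hi'lt : i' < lam.ord := max_lt hi₁ hii1
    have hei' : e < nth K i' :=
      lt_of_lt_of_le h1 (nth_le_nth (hKstage _ hi'lt) (le_max_left _ _))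
    rcases hAacc.2 (nth K i') (hKltA _ hi'lt) with ⟨e', he'S, he'1, he'2⟩
    exact ⟨(i', e'), ⟨hi'lt, he'S, he'2, he'1⟩, le_max_right _ _, hei'⟩
  have hP0ex : ∃ e₀, P (Order.succ θ, e₀) := by
    have h1 : Order.succ θ < lam.ord := hlamlim.succ_lt hθ
    rcases hAacc.2 (nth K (Order.succ θ)) (hKltA _ h1) with ⟨e₀, he, h2, h3⟩
    exact ⟨e₀, h1, he, h3, h2⟩
  rcases hP0ex with ⟨e₀, hP0⟩
  set F : {p // P p} → {p // P p} :=
    fun p => ⟨Classical.choose (hstep p.1 p.2), (Classical.choose_spec (hstep p.1 p.2)).1⟩ with hF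
  set f : ℕ → {p // P p} := fun n => F^[n] ⟨(Order.succ θ, e₀), hP0⟩ with hf
  have hfs : ∀ n, f (n+1) = F (f n) := fun n => Function.iterate_succ_apply' F n _
  set I : ℕ → Ordinal := fun n => (f n).1.1 with hI
  set e : ℕ → Ordinal := fun n => (f n).1.2 with he
  have hPn : ∀ n, P ((f n).1) := fun n => (f n).2
  have hrel : ∀ n, I n + I n + 1 ≤ I (n+1) ∧ e n < nth K (I (n+1)) := by
    intro n
    have h2 : (f (n+1)).1 = Classical.choose (hstep (f n).1 (f n).2) := by rw [hfs n]
    have h3 := (Classical.choose_spec (hstep (f n).1 (f n).2)).2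
    rw [← h2] at h3
    exact h3
  have hI0 : I 0 = Order.succ θ := rfl
  have hIlt : ∀ n, I n < lam.ord := fun n => (hPn n).1
  have hImono : StrictMono I := by
    apply strictMono_nat_of_lt_succ
    intro n
    refine lt_of_lt_of_le ?_ (hrel n).1
    refine lt_of_le_of_lt (le_self_add : I n ≤ I n + I n) ?_
    rw [Ordinal.add_one_eq_succ]; exact Order.lt_succ _
  set γ := iSup I with hγ
  have hγlam : γ < lam.ord := by
    refine Ordinal.iSup_lt_ord_lift ?_ hIlt
    rw [hreg.cof_eq, Cardinal.mk_nat, Cardinal.lift_aleph0]; exact hunc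
  have hIγ : ∀ n, I n < γ :=
    fun n => lt_of_lt_of_le (hImono (Nat.lt_succ_self n)) (Ordinal.le_iSup I (n+1))
  have hθγ : θ < γ := lt_of_lt_of_le (Order.lt_succ θ) (hI0 ▸ Ordinal.le_iSup I 0)
  have hγlim : Order.IsSuccLimit γ := by
    rw [Ordinal.isSuccLimit_iff, Order.isSuccPrelimit_iff_succ_lt]
    constructor
    · intro h0
      exact absurd (h0 ▸ hIγ 0 : I 0 < 0) (not_lt_of_ge zero_le)
    · intro a ha
      rcases Ordinal.lt_iSup_iff.1 ha with ⟨n, hn⟩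
      exact lt_of_le_of_lt (Order.succ_le_of_lt hn) (hIγ n)
  have hind : ∀ a < γ, ∀ b < γ, a + b < γ := by
    intro a ha b hb
    rcases Ordinal.lt_iSup_iff.1 ha with ⟨n, hn⟩
    rcases Ordinal.lt_iSup_iff.1 hb with ⟨k, hk⟩
    have ha' : a < I (max n k) := lt_of_lt_of_le hn (hImono.monotone (le_max_left n k))
    have hb' : b < I (max n k) := lt_of_lt_of_le hk (hImono.monotone (le_max_right n k))
    have hab : a + b < I (max n k) + I (max n k) + 1 := by
      calc a + b < a + I (max n k) := (add_lt_add_iff_left a).2 hb'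
      _ ≤ I (max n k) + I (max n k) := add_le_add_left ha'.le _
      _ < I (max n k) + I (max n k) + 1 := by
          rw [Ordinal.add_one_eq_succ]; exact Order.lt_succ _
    exact lt_trans (lt_of_lt_of_le hab (hrel (max n k)).1) (hIγ (max n k + 1))
  have hγstage : Stage K γ := hKstage γ hγlam
  set β := nth K γ with hβ
  have hβacc : β ∈ acc K := nth_limit_mem_acc hKclub hγlim hγstage
  have hβA : β < A := hKsub hγstage.nth_mem.1
  have hβT : β < T := hβA.trans hAT
  have hβbsup : β = Ordinal.bsup γ (fun j _ => nth K j) := nth_limit hKclub hγlim hγstage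
  have heS : ∀ n, e n ∈ S := fun n => (hPn n).2.1
  have hIne : ∀ n, nth K (I n) < e n := fun n => (hPn n).2.2.2
  have hen_lt : ∀ n, e n < β :=
    fun n => lt_trans (hrel n).2 (nth_lt_nth hγstage (hIγ (n+1)))
  have hβS : β ∈ S := by
    refine hSclub.2.2 β hβT ⟨⟨e 0, heS 0, hen_lt 0⟩, ?_⟩
    intro c hc
    rw [hβbsup] at hc
    rcases (Ordinal.lt_bsup _).1 hc with ⟨j, hj, hcj⟩
    rcases Ordinal.lt_iSup_iff.1 hj with ⟨n, hn⟩
    have hcen : c < e n :=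
      lt_of_lt_of_le hcj (le_trans (nth_le_nth (hKstage _ (hIlt n)) hn.le) (hIne n).le)
    exact ⟨e n, heS n, hcen, hen_lt n⟩
  have hCβ : C β = K ∩ Set.Iio β := hKcoh β hβacc
  have hotpβ : otp (C β) = γ := by rw [hCβ]; exact otp_segment hγstage
  have hcofβ : β.cof < lam := by
    have h1 : β.cof ≤ γ.card := by
      rw [hβbsup]
      refine Ordinal.cof_bsup_le ?_
      intro i hi
      rw [← hβbsup]
      exact nth_lt_nth hγstage hi
    exact lt_of_le_of_lt h1 (Cardinal.lt_ord.1 hγlam)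
  have hβmem : β ∈ {α | α < T ∧ α.cof < lam ∧ otp (C α) = γ} := ⟨hβT, hcofβ, hotpβ⟩
  have hβE : β ∈ E γ := hβS.2 γ hγlam
  have hempty := hEavoid γ ⟨hind, hθγ, hγlam⟩
  rw [Set.eq_empty_iff_forall_notMem] at hempty
  exact hempty β ⟨hβmem, hβE⟩

end
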